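/- Assume the consistency condition: for all z ∈ Z, k ∈ Fin K, c, c' ∈ C, P((z,k,3,c),(z,k,1,c')) = ∑_{k̂∈Fin K, v∈V} p(k,k̂,v)·x(z,k̂,v,c,c'). Then for every m ∈ ℕ, every sequence of perfect-perception states s₀, s₁, …, s_m ∈ S with s_i = (z_i,k_i,t_i,c_i) such that t₀ ≠ 3, and every k̂₀ ∈ Fin K and v₀ ∈ V, the path probability ∏_{i=0}^{m-1} P(s_i, s_{i+1}) equals the sum, over all sequences of augmented states ŝ₀, ŝ₁, …, ŝ_m ∈ Ŝ whose componentwise projections (dropping the k̂ and v components) equal s₀, …, s_m and with ŝ₀ = (z₀,k₀,k̂₀,v₀,t₀,c₀), of ∏_{i=0}^{m-1} P̂(ŝ_i, ŝ_{i+1}). -/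

import Mathlib

open Finset

/-- Perfect-perception states `s = (z, k, t, c)`.
Turn-flag encoding: `(0 : Fin 3)` is turn 1, `1` is turn 2, `2` is turn 3. -/
abbrev PState (Z C : Type*) (K : ℕ) := Z × Fin K × Fin 3 × C

/-- Augmented (DNN-perception) states `ŝ = (z, k, k̂, v, t, c)`. -/
abbrev AState (Z C V : Type*) (K : ℕ) := Z × Fin K × Fin K × V × Fin 3 × C

/-- The augmented transition function `P̂` of the DNN-perception pDTMC. -/
noncomputable def Phat {Z C V : Type*} {K : ℕ}
    [DecidableEq Z] [DecidableEq C] [DecidableEq V]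
    (P : PState Z C K → PState Z C K → ℝ)
    (p : Fin K → Fin K → V → ℝ) (x : Z → Fin K → V → C → C → ℝ) :
    AState Z C V K → AState Z C V K → ℝ
  | (z, k, kh, v, t, c), (z', k', kh', v', t', c') =>
    if t = 0 then (if kh' = kh ∧ v' = v then P (z, k, 0, c) (z', k', t', c') else 0)
    else if t = 1 then P (z, k, 1, c) (z', k', t', c') * p k' kh' v'
    else if z' = z ∧ k' = k ∧ kh' = kh ∧ v' = v ∧ t' = 0 then x z kh v c c' else 0

/-- Projection dropping the `k̂` and `v` components of an augmented state. -/
def projState {Z C V : Type*} {K : ℕ} : AState Z C V K → PState Z C K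
  | (z, k, _, _, t, c) => (z, k, t, c)


section StmtSixAux
set_option linter.unusedSectionVars false
set_option maxHeartbeats 1000000

variable {Z C V : Type*} {K : ℕ}
    [Fintype Z] [DecidableEq Z]
    [Fintype C] [DecidableEq C]
    [Fintype V] [DecidableEq V]

/-- lift a perfect-perception state to an augmented state using DNN data `a = (k̂, v)`. -/
def buildA (s : PState Z C K) (a : Fin K × V) : AState Z C V K :=
  (s.1, s.2.1, a.1, a.2, s.2.2.1, s.2.2.2)

lemma buildA_proj (s : AState Z C V K) :
    buildA (projState s) (s.2.2.1, s.2.2.2.1) = s := rfl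

lemma Phat_buildA (P : PState Z C K → PState Z C K → ℝ)
    (p : Fin K → Fin K → V → ℝ) (x : Z → Fin K → V → C → C → ℝ)
    (s s' : PState Z C K) (a a' : Fin K × V) :
    Phat P p x (buildA s a) (buildA s' a') =
      if s.2.2.1 = 0 then (if a' = a then P s s' else 0)
      else if s.2.2.1 = 1 then P s s' * p s'.2.1 a'.1 a'.2
      else if s'.1 = s.1 ∧ s'.2.1 = s.2.1 ∧ a' = a ∧ s'.2.2.1 = 0
        then x s.1 a.1 a.2 s.2.2.2 s'.2.2.2 else 0 := by
  obtain ⟨z, k, t, c⟩ := s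
  obtain ⟨z', k', t', c'⟩ := s'
  obtain ⟨kh, v⟩ := a
  obtain ⟨kh', v'⟩ := a'
  simp only [Phat, buildA, Prod.mk.injEq]
  split_ifs with h1 h2 <;> simp_all <;> by_cases hk : kh' = kh <;> by_cases hv : v' = v <;>
    by_cases hz : z' = z <;> by_cases hk' : k' = k <;> by_cases ht : t' = 0 <;> simp_all

noncomputable def Gsum (P : PState Z C K → PState Z C K → ℝ)
    (p : Fin K → Fin K → V → ℝ) (x : Z → Fin K → V → C → C → ℝ)
    (m : ℕ) (σ : Fin (m + 1) → PState Z C K) (a : Fin K × V) : ℝ :=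
  ∑ τ : Fin m → Fin K × V, ∏ i : Fin m,
    Phat P p x (buildA (σ i.castSucc) ((Fin.cons a τ : Fin (m+1) → Fin K × V) i.castSucc))
      (buildA (σ i.succ) ((Fin.cons a τ : Fin (m+1) → Fin K × V) i.succ))

lemma Gsum_zero (P : PState Z C K → PState Z C K → ℝ)
    (p : Fin K → Fin K → V → ℝ) (x : Z → Fin K → V → C → C → ℝ)
    (σ : Fin 1 → PState Z C K) (a : Fin K × V) :
    Gsum P p x 0 σ a = 1 := by
  simp [Gsum]

lemma Gsum_succ (P : PState Z C K → PState Z C K → ℝ)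
    (p : Fin K → Fin K → V → ℝ) (x : Z → Fin K → V → C → C → ℝ)
    (m : ℕ) (σ : Fin (m + 2) → PState Z C K) (a : Fin K × V) :
    Gsum P p x (m + 1) σ a =
      ∑ b : Fin K × V, Phat P p x (buildA (σ 0) a) (buildA (σ 1) b) *
        Gsum P p x m (σ ∘ Fin.succ) b := by
  rw [Gsum]
  rw [← Equiv.sum_comp (Fin.consEquiv (fun _ : Fin (m+1) => Fin K × V))]
  rw [Fintype.sum_prod_type]
  refine Finset.sum_congr rfl fun b _ => ?_
  rw [Gsum, Finset.mul_sum]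
  refine Finset.sum_congr rfl fun τ _ => ?_
  rw [Fin.prod_univ_succ]
  have h0 : (Fin.consEquiv (fun _ : Fin (m+1) => Fin K × V)) (b, τ) = Fin.cons b τ := rfl
  simp only [h0, Fin.cons_zero, Fin.cons_succ, Fin.succ_castSucc, Function.comp_apply,
    Fin.castSucc_zero, Fin.succ_zero_eq_one]
  rfl

lemma prodP (P : PState Z C K → PState Z C K → ℝ) (n : ℕ) (f : Fin (n+2) → PState Z C K) :
    ∏ i : Fin (n+1), P (f i.castSucc) (f i.succ) =
      P (f 0) (f 1) * ∏ i : Fin n, P ((f ∘ Fin.succ) i.castSucc) ((f ∘ Fin.succ) i.succ) := by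
  rw [Fin.prod_univ_succ]
  simp [Function.comp]

section Key

variable (P : PState Z C K → PState Z C K → ℝ)
    (hPnn : ∀ s s', 0 ≤ P s s')
    (hPturn : ∀ (z : Z) (k : Fin K) (t : Fin 3) (c : C)
        (z' : Z) (k' : Fin K) (t' : Fin 3) (c' : C),
      0 < P (z, k, t, c) (z', k', t', c') →
        (t = 0 → k' = k ∧ c' = c ∧ t' ≠ 2) ∧
        (t = 1 → z' = z ∧ c' = c ∧ t' = 2) ∧
        (t = 2 → z' = z ∧ k' = k ∧ t' = 0))
    (p : Fin K → Fin K → V → ℝ)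
    (hpsum : ∀ k, ∑ kh, ∑ v, p k kh v = 1)
    (x : Z → Fin K → V → C → C → ℝ)
    (hcons : ∀ (z : Z) (k : Fin K) (c c' : C),
      P (z, k, 2, c) (z, k, 0, c') = ∑ kh, ∑ v, p k kh v * x z kh v c c')

include hPnn hPturn in
lemma Pzero0 {s s' : PState Z C K} (h : s.2.2.1 = 0) (h2 : s'.2.2.1 = 2) : P s s' = 0 := by
  by_contra hne
  have hp : 0 < P s s' := lt_of_le_of_ne (hPnn _ _) (Ne.symm hne)
  have := (hPturn s.1 s.2.1 s.2.2.1 s.2.2.2 s'.1 s'.2.1 s'.2.2.1 s'.2.2.2 hp).1 h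
  exact this.2.2 h2

include hPnn hPturn in
lemma Pzero2 {s s' : PState Z C K} (h : s.2.2.1 = 2)
    (hc : ¬(s'.1 = s.1 ∧ s'.2.1 = s.2.1 ∧ s'.2.2.1 = 0)) : P s s' = 0 := by
  by_contra hne
  have hp : 0 < P s s' := lt_of_le_of_ne (hPnn _ _) (Ne.symm hne)
  exact hc ((hPturn s.1 s.2.1 s.2.2.1 s.2.2.2 s'.1 s'.2.1 s'.2.2.1 s'.2.2.2 hp).2.2 h)

include hPnn hPturn hpsum hcons in
lemma keyA : ∀ m (σ : Fin (m+1) → PState Z C K), (σ 0).2.2.1 ≠ 2 →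
    ∀ a : Fin K × V, Gsum P p x m σ a = ∏ i : Fin m, P (σ i.castSucc) (σ i.succ) := by
  intro m
  induction m using Nat.strong_induction_on with
  | _ m ih =>
    match m with
    | 0 =>
      intro σ _ a
      rw [Gsum_zero]
      simp
    | Nat.succ n =>
      intro σ ht0 a
      rw [Gsum_succ, prodP]
      simp only [Phat_buildA]
      have htail0 : (σ ∘ Fin.succ) 0 = σ 1 := by
        simp [Function.comp, Fin.succ_zero_eq_one]
      have h3 : ∀ t : Fin 3, t ≠ 2 → t = 0 ∨ t = 1 := by decide
      rcases h3 _ ht0 with h0 | h1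
      · -- t0 = 0
        simp only [h0, if_pos rfl, ite_mul, zero_mul, Finset.sum_ite_eq', Finset.mem_univ,
          if_true]
        by_cases h1' : (σ 1).2.2.1 = 2
        · have hP0 : P (σ 0) (σ 1) = 0 := Pzero0 P hPnn hPturn h0 h1'
          rw [hP0, zero_mul, zero_mul]
        · rw [ih n (by omega) (σ ∘ Fin.succ) (by rw [htail0]; exact h1') a]
      · -- t0 = 1
        have hne : (σ 0).2.2.1 ≠ 0 := by rw [h1]; decide
        simp only [if_neg hne, if_pos h1]
        by_cases h1' : (σ 1).2.2.1 = 2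
        · match n with
          | 0 =>
            simp only [Gsum_zero, mul_one]
            rw [← Finset.mul_sum, Fintype.sum_prod_type, hpsum]
            simp
          | Nat.succ n' =>
            -- expand the inner Gsum one more step
            have hGexp : ∀ b : Fin K × V,
                Gsum P p x (n' + 1) (σ ∘ Fin.succ) b =
                ∑ b' : Fin K × V,
                  Phat P p x (buildA (σ 1) b) (buildA (σ 2) b') *
                    Gsum P p x n' (σ ∘ Fin.succ ∘ Fin.succ) b' := by
              intro b
              rw [Gsum_succ]
              refine Finset.sum_congr rfl fun b' _ => ?_
              have e1 : (σ ∘ Fin.succ) 0 = σ 1 := htail0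
              have e2 : (σ ∘ Fin.succ) 1 = σ 2 := by
                simp [Function.comp]
              have e3 : (σ ∘ Fin.succ) ∘ Fin.succ = σ ∘ Fin.succ ∘ Fin.succ := rfl
              rw [e1, e2, e3]
            simp only [hGexp, Phat_buildA]
            have hne1 : (σ 1).2.2.1 ≠ 0 := by rw [h1']; decide
            have hne2 : (σ 1).2.2.1 ≠ 1 := by rw [h1']; decide
            simp only [if_neg hne1, if_neg hne2]
            have htail20 : (σ ∘ Fin.succ ∘ Fin.succ) 0 = σ 2 := by
              simp [Function.comp]
            by_cases hcond : (σ 2).1 = (σ 1).1 ∧ (σ 2).2.1 = (σ 1).2.1 ∧ (σ 2).2.2.1 = 0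
            · obtain ⟨hz, hk, ht2⟩ := hcond
              simp only [hz, hk, ht2, eq_self_iff_true, true_and, and_true, ite_mul, zero_mul,
                Finset.sum_ite_eq', Finset.mem_univ, if_true]
              have hQ : ∀ b : Fin K × V,
                  Gsum P p x n' (σ ∘ Fin.succ ∘ Fin.succ) b =
                  ∏ i : Fin n', P ((σ ∘ Fin.succ ∘ Fin.succ) i.castSucc)
                    ((σ ∘ Fin.succ ∘ Fin.succ) i.succ) := by
                intro b
                exact ih n' (by omega) _ (by rw [htail20, ht2]; decide) b
              simp only [hQ]
              -- now both sides are sums/products of scalars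
              have e1 : ((σ 1).1, (σ 1).2.1, (2 : Fin 3), (σ 1).2.2.2) = σ 1 := by
                rw [← h1']
              have e2 : ((σ 1).1, (σ 1).2.1, (0 : Fin 3), (σ 2).2.2.2) = σ 2 := by
                rw [← hz, ← hk, ← ht2]
              have hPc : P (σ 1) (σ 2) = ∑ kh, ∑ v, p (σ 1).2.1 kh v *
                  x (σ 1).1 kh v (σ 1).2.2.2 (σ 2).2.2.2 := by
                rw [← e1, ← e2]
                exact hcons _ _ _ _
              rw [prodP P n' (σ ∘ Fin.succ)]
              rw [htail0]
              have e2' : (σ ∘ Fin.succ) 1 = σ 2 := by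
                simp [Function.comp]
              rw [e2']
              have e3 : (σ ∘ Fin.succ) ∘ Fin.succ = σ ∘ Fin.succ ∘ Fin.succ := rfl
              rw [e3, hPc]
              set Q := ∏ i : Fin n', P ((σ ∘ Fin.succ ∘ Fin.succ) i.castSucc)
                ((σ ∘ Fin.succ ∘ Fin.succ) i.succ) with hQdef
              rw [Fintype.sum_prod_type]
              simp only [Finset.mul_sum, Finset.sum_mul]
              refine Finset.sum_congr rfl fun kh _ => Finset.sum_congr rfl fun v _ => ?_
              ring
            · -- inconsistent next state: everything is zero
              have hz2 : P (σ 1) (σ 2) = 0 := Pzero2 P hPnn hPturn h1' hcond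
              have hin : ∀ b b' : Fin K × V,
                  ¬((σ 2).1 = (σ 1).1 ∧ (σ 2).2.1 = (σ 1).2.1 ∧ b' = b ∧ (σ 2).2.2.1 = 0) := by
                intro b b' hcc
                exact hcond ⟨hcc.1, hcc.2.1, hcc.2.2.2⟩
              have hz' : ∀ b : Fin K × V, (∑ b' : Fin K × V,
                  (if (σ 2).1 = (σ 1).1 ∧ (σ 2).2.1 = (σ 1).2.1 ∧ b' = b ∧ (σ 2).2.2.1 = 0
                    then x (σ 1).1 b.1 b.2 (σ 1).2.2.2 (σ 2).2.2.2 else 0) *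
                    Gsum P p x n' (σ ∘ Fin.succ ∘ Fin.succ) b') = 0 := by
                intro b
                apply Finset.sum_eq_zero
                intro b' _
                rw [if_neg (hin b b'), zero_mul]
              simp only [hz', mul_zero, Finset.sum_const_zero]
              rw [prodP P n' (σ ∘ Fin.succ), htail0]
              have e2' : (σ ∘ Fin.succ) 1 = σ 2 := by
                simp [Function.comp]
              rw [e2', hz2]
              ring
        · -- t1 ≠ 2 : direct IH
          have hIH : ∀ b : Fin K × V, Gsum P p x n (σ ∘ Fin.succ) b =
              ∏ i : Fin n, P ((σ ∘ Fin.succ) i.castSucc) ((σ ∘ Fin.succ) i.succ) :=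
            fun b => ih n (by omega) _ (by rw [htail0]; exact h1') b
          simp only [hIH]
          rw [← Finset.sum_mul, ← Finset.mul_sum, Fintype.sum_prod_type, hpsum]
          ring

end Key

lemma filter_sum_eq_Gsum (P : PState Z C K → PState Z C K → ℝ)
    (p : Fin K → Fin K → V → ℝ) (x : Z → Fin K → V → C → C → ℝ)
    (m : ℕ) (σ : Fin (m + 1) → PState Z C K) (kh0 : Fin K) (v0 : V) :
    ∑ σL ∈ Finset.univ.filter (fun σL : Fin (m + 1) → AState Z C V K =>
        (∀ i, projState (σL i) = σ i) ∧
        σL 0 = ((σ 0).1, (σ 0).2.1, kh0, v0, (σ 0).2.2.1, (σ 0).2.2.2)),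
      ∏ i : Fin m, Phat P p x (σL i.castSucc) (σL i.succ) = Gsum P p x m σ (kh0, v0) := by
  rw [Gsum]
  refine Finset.sum_bij'
    (fun σL _ => fun i : Fin m => ((σL i.succ).2.2.1, (σL i.succ).2.2.2.1))
    (fun τ _ => fun j : Fin (m+1) =>
      buildA (σ j) ((Fin.cons (kh0, v0) τ : Fin (m+1) → Fin K × V) j))
    ?_ ?_ ?_ ?_ ?_
  · intro σL _
    exact Finset.mem_univ _
  · intro τ _
    simp only [Finset.mem_filter, Finset.mem_univ, true_and]
    constructor
    · intro i
      rfl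
    · rfl
  · -- left inverse
    intro σL hσL
    simp only [Finset.mem_filter, Finset.mem_univ, true_and] at hσL
    obtain ⟨hproj, h0⟩ := hσL
    funext j
    refine Fin.cases ?_ (fun i => ?_) j
    · rw [h0]
      rfl
    · show buildA (σ i.succ) ((σL i.succ).2.2.1, (σL i.succ).2.2.2.1) = σL i.succ
      rw [← hproj i.succ]
      exact buildA_proj _
  · -- right inverse
    intro τ _
    funext i
    rfl
  · -- values agree
    intro σL hσL
    simp only [Finset.mem_filter, Finset.mem_univ, true_and] at hσL
    obtain ⟨hproj, h0⟩ := hσL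
    have hL : ∀ j : Fin (m+1), σL j =
        buildA (σ j) ((Fin.cons (kh0, v0)
          (fun i : Fin m => ((σL i.succ).2.2.1, (σL i.succ).2.2.2.1)) :
          Fin (m+1) → Fin K × V) j) := by
      intro j
      refine Fin.cases ?_ (fun i => ?_) j
      · rw [h0]; rfl
      · show σL i.succ = buildA (σ i.succ) ((σL i.succ).2.2.1, (σL i.succ).2.2.2.1)
        rw [← hproj i.succ]
        exact (buildA_proj _).symm
    refine Finset.prod_congr rfl fun i _ => ?_
    rw [← hL i.castSucc, ← hL i.succ]

end StmtSixAux

/-- under the consistency condition relating the perfect-perception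
controller parameters to the DNN-perception ones, every path probability of the
perfect-perception chain (starting in a state with turn flag `t₀ ≠ 3`, i.e. `≠ 2` in our
encoding) equals the total probability of all its lifts in the augmented chain that start
from the given initial DNN output `k̂₀` and verification result `v₀`. -/
theorem stmt6 {Z C V : Type*} {K : ℕ}
    [Fintype Z] [Nonempty Z] [DecidableEq Z]
    [Fintype C] [Nonempty C] [DecidableEq C]
    [Fintype V] [Nonempty V] [DecidableEq V]
    (hK : 1 ≤ K)
    (P : PState Z C K → PState Z C K → ℝ)
    (hPnn : ∀ s s', 0 ≤ P s s')
    (hPsum : ∀ s, ∑ s', P s s' = 1)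
    (hPturn : ∀ (z : Z) (k : Fin K) (t : Fin 3) (c : C)
        (z' : Z) (k' : Fin K) (t' : Fin 3) (c' : C),
      0 < P (z, k, t, c) (z', k', t', c') →
        (t = 0 → k' = k ∧ c' = c ∧ t' ≠ 2) ∧
        (t = 1 → z' = z ∧ c' = c ∧ t' = 2) ∧
        (t = 2 → z' = z ∧ k' = k ∧ t' = 0))
    (p : Fin K → Fin K → V → ℝ)
    (hpnn : ∀ k kh v, 0 ≤ p k kh v)
    (hpsum : ∀ k, ∑ kh, ∑ v, p k kh v = 1)
    (x : Z → Fin K → V → C → C → ℝ)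
    (hx0 : ∀ z kh v c c', 0 ≤ x z kh v c c')
    (hx1 : ∀ z kh v c c', x z kh v c c' ≤ 1)
    (hxsum : ∀ z kh v c, ∑ c', x z kh v c c' = 1)
    (hcons : ∀ (z : Z) (k : Fin K) (c c' : C),
      P (z, k, 2, c) (z, k, 0, c') = ∑ kh, ∑ v, p k kh v * x z kh v c c')
    (m : ℕ) (σ : Fin (m + 1) → PState Z C K)
    (ht0 : (σ 0).2.2.1 ≠ 2)
    (kh0 : Fin K) (v0 : V) :
    ∏ i : Fin m, P (σ i.castSucc) (σ i.succ) =
      ∑ σL ∈ Finset.univ.filter (fun σL : Fin (m + 1) → AState Z C V K =>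
          (∀ i, projState (σL i) = σ i) ∧
          σL 0 = ((σ 0).1, (σ 0).2.1, kh0, v0, (σ 0).2.2.1, (σ 0).2.2.2)),
        ∏ i : Fin m, Phat P p x (σL i.castSucc) (σL i.succ) := by
  rw [filter_sum_eq_Gsum P p x m σ kh0 v0]
  exact (keyA P hPnn hPturn p hpsum x hcons m σ ht0 (kh0, v0)).symm
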